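/- Let p be a prime, δ = p^{−1/(p−1)}, and let F be a complete field of characteristic zero with a multiplicative nonarchimedean absolute value ‖·‖ whose restriction to ℚ is the p-adic absolute value. Let α₁, …, α_s ∈ F be distinct, let n = (n₁, …, n_s) ∈ ℕ^s have all coordinates positive with N = n₁+⋯+n_s, fix ℓ ∈ {1, …, s}, and set P = P_{n−e_ℓ}. Then: (a) for every i, ‖P(α_i)‖ ≤ p³·N·∏_{k=1}^s max(‖α_i − α_k‖, δ)^{n_k}; (b) if ‖α_i − α_k‖ = 1 for all k ≠ i, then ‖P(α_i)‖ ≤ ‖((n_i − 1)! : F)‖; (c) for every pair i, j with 0 < ‖α_j − α_i‖ < δ, ‖P(α_i)·exp(α_j − α_i) − P(α_j)‖ ≤ p³·N·∏_{k=1}^s max(‖α_i − α_k‖, ‖α_j − α_k‖)^{n_k}, where exp(x) = Σ_{m≥0} x^m/m!. -/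

import Mathlib

open Polynomial

section auxlemmas
variable {F : Type*} [NormedField F]

private lemma na_sum (hna : ∀ x y : F, ‖x + y‖ ≤ max ‖x‖ ‖y‖) {ι : Type*} (s : Finset ι)
    (f : ι → F) {C : ℝ} (hC : 0 ≤ C) (h : ∀ i ∈ s, ‖f i‖ ≤ C) : ‖∑ i ∈ s, f i‖ ≤ C := by
  induction s using Finset.cons_induction with
  | empty => simpa
  | cons a s ha ih =>
    rw [Finset.sum_cons]
    exact (hna _ _).trans (max_le (h a (Finset.mem_cons_self a s))
      (ih fun i hi => h i (Finset.mem_cons_of_mem hi)))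

private lemma na_tsum (hna : ∀ x y : F, ‖x + y‖ ≤ max ‖x‖ ‖y‖) (u : ℕ → F) (hu : Summable u)
    {C : ℝ} (hC : 0 ≤ C) (h : ∀ i, ‖u i‖ ≤ C) : ‖∑' i, u i‖ ≤ C :=
  le_of_tendsto hu.hasSum.norm
    (Filter.Eventually.of_forall fun s => na_sum hna s u hC fun i _ => h i)

private lemma gauss_coeff (hna : ∀ x y : F, ‖x + y‖ ≤ max ‖x‖ ‖y‖) {c : ℝ} (hc : 0 < c)
    (L : Multiset F) :
    ∀ j, ‖((L.map fun a => X + C a).prod).coeff j‖ * c ^ j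
        ≤ (L.map fun a => max ‖a‖ c).prod := by
  induction L using Multiset.induction_on with
  | empty =>
    intro j
    rcases j with _ | j <;> simp [coeff_one, Nat.succ_ne_zero]
  | cons a L ih =>
    have hB : (0:ℝ) ≤ (L.map fun a => max ‖a‖ c).prod := by
      apply Multiset.prod_nonneg
      intro x hx
      simp only [Multiset.mem_map] at hx
      obtain ⟨b, -, rfl⟩ := hx
      exact le_trans hc.le (le_max_right _ _)
    have hac : (0:ℝ) ≤ max ‖a‖ c := le_trans hc.le (le_max_right _ _)
    intro j
    simp only [Multiset.map_cons, Multiset.prod_cons]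
    rcases j with _ | j
    · rw [pow_zero, mul_one, Polynomial.mul_coeff_zero]
      simp only [coeff_add, coeff_X_zero, coeff_C_zero, zero_add, norm_mul]
      calc ‖a‖ * ‖((L.map fun a => X + C a).prod).coeff 0‖
          ≤ max ‖a‖ c * (‖((L.map fun a => X + C a).prod).coeff 0‖ * c ^ 0) := by
            rw [pow_zero, mul_one]
            exact mul_le_mul (le_max_left _ _) le_rfl (norm_nonneg _) hac
        _ ≤ max ‖a‖ c * (L.map fun a => max ‖a‖ c).prod :=
            mul_le_mul_of_nonneg_left (ih 0) hac
    · set g := (L.map fun a => X + C a).prod with hg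
      have hco : ((X + C a) * g).coeff (j+1) = g.coeff j + a * g.coeff (j+1) := by
        rw [add_mul, coeff_add, coeff_X_mul, coeff_C_mul]
      rw [hco]
      have h1 : ‖g.coeff j + a * g.coeff (j+1)‖ ≤ max ‖g.coeff j‖ (‖a‖ * ‖g.coeff (j+1)‖) := by
        simpa [norm_mul] using hna (g.coeff j) (a * g.coeff (j+1))
      have hcp : (0:ℝ) < c ^ (j+1) := pow_pos hc _
      calc ‖g.coeff j + a * g.coeff (j+1)‖ * c ^ (j+1)
          ≤ max ‖g.coeff j‖ (‖a‖ * ‖g.coeff (j+1)‖) * c ^ (j+1) :=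
            mul_le_mul_of_nonneg_right h1 hcp.le
        _ = max (‖g.coeff j‖ * c ^ (j+1)) (‖a‖ * ‖g.coeff (j+1)‖ * c ^ (j+1)) := by
            rw [max_mul_of_nonneg _ _ hcp.le]
        _ ≤ max ‖a‖ c * (L.map fun a => max ‖a‖ c).prod := by
            apply max_le
            · calc ‖g.coeff j‖ * c ^ (j+1) = c * (‖g.coeff j‖ * c ^ j) := by ring
                _ ≤ c * (L.map fun a => max ‖a‖ c).prod :=
                    mul_le_mul_of_nonneg_left (ih j) hc.le
                _ ≤ max ‖a‖ c * (L.map fun a => max ‖a‖ c).prod :=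
                    mul_le_mul_of_nonneg_right (le_max_right _ _) hB
            · calc ‖a‖ * ‖g.coeff (j+1)‖ * c ^ (j+1)
                  = ‖a‖ * (‖g.coeff (j+1)‖ * c ^ (j+1)) := by ring
                _ ≤ ‖a‖ * (L.map fun a => max ‖a‖ c).prod :=
                    mul_le_mul_of_nonneg_left (ih (j+1)) (norm_nonneg _)
                _ ≤ max ‖a‖ c * (L.map fun a => max ‖a‖ c).prod :=
                    mul_le_mul_of_nonneg_right (le_max_left _ _) hB

private lemma coeff_prod_bound (hna : ∀ x y : F, ‖x + y‖ ≤ max ‖x‖ ‖y‖) {c : ℝ} (hc : 0 < c)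
    {s : ℕ} (b : Fin s → F) (m : Fin s → ℕ) (j : ℕ) :
    ‖(∏ k, (X + C (b k)) ^ m k).coeff j‖ * c ^ j ≤ ∏ k, max ‖b k‖ c ^ m k := by
  have h := gauss_coeff hna hc (Finset.univ.val.bind fun k => Multiset.replicate (m k) (b k)) j
  have conv1 : ((Finset.univ.val.bind fun k => Multiset.replicate (m k) (b k)).map
      fun a => X + C a).prod = ∏ k, (X + C (b k)) ^ m k := by
    rw [Multiset.map_bind, Multiset.prod_bind, Finset.prod_eq_multiset_prod]
    simp [Multiset.map_replicate, Multiset.prod_replicate]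
  have conv2 : ((Finset.univ.val.bind fun k => Multiset.replicate (m k) (b k)).map
      fun a => max ‖a‖ c).prod = ∏ k, max ‖b k‖ c ^ m k := by
    rw [Multiset.map_bind, Multiset.prod_bind, Finset.prod_eq_multiset_prod]
    simp [Multiset.map_replicate, Multiset.prod_replicate]
  rw [conv1, conv2] at h
  exact h

private lemma double_sum_reindex {F : Type*} [Field F] (g u : ℕ → F) (D : ℕ)
    (hg : ∀ m, D < m → g m = 0) :
    ∑ q ∈ Finset.range (D+1), ∑ t ∈ Finset.range (D+1), g (t + q) * u t
      = ∑ m ∈ Finset.range (D+1), g m * ∑ t ∈ Finset.range (m+1), u t := by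
  rw [Finset.sum_comm]
  have step1 : ∀ t ∈ Finset.range (D+1),
      ∑ q ∈ Finset.range (D+1), g (t + q) * u t
        = ∑ m ∈ Finset.range (D+1), (if t ≤ m then g m * u t else 0) := by
    intro t ht
    have ht' : t ≤ D := Finset.mem_range_succ_iff.mp ht
    have l1 : ∑ q ∈ Finset.range (D+1), g (t + q) = ∑ m ∈ Finset.Ico t (t + (D+1)), g m := by
      rw [Finset.sum_Ico_eq_sum_range]
      simp [add_comm]
    have l2 : ∑ m ∈ Finset.Ico t (t + (D+1)), g m = ∑ m ∈ Finset.Ico t (D+1), g m := by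
      rw [← Finset.sum_Ico_consecutive g (by omega : t ≤ D+1) (by omega : D+1 ≤ t + (D+1))]
      have : ∑ m ∈ Finset.Ico (D+1) (t + (D+1)), g m = 0 :=
        Finset.sum_eq_zero fun m hm => hg m (by
          have := (Finset.mem_Ico.mp hm).1; omega)
      rw [this, add_zero]
    have l3 : ∑ m ∈ Finset.Ico t (D+1), g m
        = ∑ m ∈ Finset.range (D+1), (if t ≤ m then g m else 0) := by
      rw [Finset.sum_ite, Finset.sum_const_zero, add_zero]
      apply Finset.sum_congr _ (fun _ _ => rfl)
      ext m
      simp only [Finset.mem_Ico, Finset.mem_filter, Finset.mem_range]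
      omega
    rw [← Finset.sum_mul, l1, l2, l3, Finset.sum_mul]
    exact Finset.sum_congr rfl fun m _ => by split <;> simp
  rw [Finset.sum_congr rfl step1, Finset.sum_comm]
  refine Finset.sum_congr rfl fun m hm => ?_
  have hm' : m ≤ D := Finset.mem_range_succ_iff.mp hm
  rw [Finset.mul_sum, Finset.sum_ite, Finset.sum_const_zero, add_zero]
  apply Finset.sum_congr _ (fun _ _ => rfl)
  ext t
  simp only [Finset.mem_filter, Finset.mem_range]
  omega

end auxlemmas

section padicfacts
variable {F : Type*} [NormedField F] {p : ℕ} (hp : p.Prime)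
  (hQ : ∀ q : ℚ, ‖(q : F)‖ = (padicNorm p q : ℝ))
include hp hQ

private lemma norm_nat_le_one (k : ℕ) : ‖(k : F)‖ ≤ 1 := by
  haveI := Fact.mk hp
  have h1 : ((k : ℚ) : F) = (k : F) := by push_cast; ring
  rw [← h1, hQ]
  have := padicNorm.of_int (p := p) (k : ℤ)
  push_cast at this ⊢
  exact_mod_cast this

private lemma norm_factorial_eq (j : ℕ) :
    ‖((j.factorial : ℕ) : F)‖ = (p : ℝ) ^ (-(padicValNat p j.factorial : ℝ)) := by
  haveI := Fact.mk hp
  have h1 : ((j.factorial : ℚ) : F) = ((j.factorial : ℕ) : F) := by push_cast; ring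
  rw [← h1, hQ]
  rw [padicNorm.eq_zpow_of_nonzero (by exact_mod_cast j.factorial_ne_zero)]
  rw [padicValRat.of_nat, Rat.cast_zpow, ← Real.rpow_intCast, Rat.cast_natCast,
    Int.cast_neg, Int.cast_natCast]

private lemma norm_factorial_mono {a b : ℕ} (hab : a ≤ b) :
    ‖((b.factorial : ℕ) : F)‖ ≤ ‖((a.factorial : ℕ) : F)‖ := by
  obtain ⟨k, hk⟩ := Nat.factorial_dvd_factorial hab
  rw [hk]
  push_cast
  rw [norm_mul]
  calc ‖(a.factorial : F)‖ * ‖(k : F)‖ ≤ ‖(a.factorial : F)‖ * 1 :=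
    mul_le_mul_of_nonneg_left (norm_nat_le_one hp hQ k) (norm_nonneg _)
  _ = ‖(a.factorial : F)‖ := mul_one _

omit hQ in
private lemma legendre_le (j : ℕ) : (p - 1) * padicValNat p j.factorial ≤ j := by
  haveI := Fact.mk hp
  rw [sub_one_mul_padicValNat_factorial]
  omega

private lemma padic_fact_lower (j : ℕ) :
    (p:ℝ) ^ (-(j:ℝ)/((p:ℝ)-1)) ≤ ‖((j.factorial : ℕ) : F)‖ := by
  rw [norm_factorial_eq hp hQ]
  have hp1 : (1:ℝ) < p := by exact_mod_cast hp.one_lt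
  apply Real.rpow_le_rpow_of_exponent_le hp1.le
  rw [neg_div, neg_le_neg_iff, le_div_iff₀ (by linarith : (0:ℝ) < (p:ℝ)-1)]
  have := legendre_le hp j
  have hcast : ((p:ℝ) - 1) = ((p - 1 : ℕ) : ℝ) := by
    push_cast [Nat.cast_sub hp.one_le]; ring
  have h2 : ((p - 1 : ℕ) : ℝ) * (padicValNat p j.factorial : ℝ) ≤ (j : ℝ) := by
    exact_mod_cast this
  nlinarith [h2]

private lemma padic_fact_upper (j : ℕ) :
    ‖((j.factorial : ℕ) : F)‖ * (p:ℝ) ^ ((j:ℝ)/((p:ℝ)-1)) ≤ (p:ℝ) * (j+1) := by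
  haveI := Fact.mk hp
  have hp1 : (1:ℝ) < p := by exact_mod_cast hp.one_lt
  have hpm : (0:ℝ) < (p:ℝ) - 1 := by linarith
  rw [norm_factorial_eq hp hQ, ← Real.rpow_add (by linarith : (0:ℝ) < p)]
  set v := padicValNat p j.factorial with hv
  set S := (p.digits j).sum with hS
  have hleg : (p - 1) * v = j - S := sub_one_mul_padicValNat_factorial j
  have hSj : S ≤ j := Nat.digit_sum_le p j
  have hlegR : ((p:ℝ) - 1) * (v:ℝ) = (j:ℝ) - (S:ℝ) := by
    have h := hleg
    zify [hSj, hp.one_le] at h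
    exact_mod_cast h
  have hexp : -(v:ℝ) + (j:ℝ)/((p:ℝ)-1) = (S:ℝ)/((p:ℝ)-1) := by
    field_simp
    linarith [hlegR]
  rw [hexp]
  rcases Nat.eq_zero_or_pos j with rfl | hj
  · have hS0 : S = 0 := by simp [hS]
    rw [hS0]
    rw [Nat.cast_zero, zero_div, Real.rpow_zero]
    push_cast
    nlinarith
  · have hlen : (p.digits j).length = Nat.log p j + 1 :=
      Nat.digits_len p j hp.one_lt (by omega)
    have hSle : S ≤ (p - 1) * (Nat.log p j + 1) := by
      calc S ≤ (p.digits j).length * (p-1) :=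
        List.sum_le_card_nsmul _ _ (fun x hx => by
          have := Nat.digits_lt_base hp.one_lt hx; omega)
      _ = (p-1) * (Nat.log p j + 1) := by rw [hlen]; ring
    have hexple : (S:ℝ)/((p:ℝ)-1) ≤ (Nat.log p j + 1 : ℕ) := by
      rw [div_le_iff₀ hpm]
      have : (S:ℝ) ≤ ((p-1 : ℕ):ℝ) * ((Nat.log p j + 1 : ℕ):ℝ) := by exact_mod_cast hSle
      rw [Nat.cast_sub hp.one_le, Nat.cast_one] at this
      linarith
    calc (p:ℝ) ^ ((S:ℝ)/((p:ℝ)-1)) ≤ (p:ℝ) ^ ((Nat.log p j + 1 : ℕ) : ℝ) :=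
      Real.rpow_le_rpow_of_exponent_le hp1.le hexple
    _ = ((p ^ (Nat.log p j + 1) : ℕ) : ℝ) := by
        rw [Real.rpow_natCast]; push_cast; ring
    _ ≤ (p:ℝ) * (j+1) := by
        have hpl : p ^ Nat.log p j ≤ j := Nat.pow_log_le_self p (by omega)
        have h3 : p ^ (Nat.log p j + 1) ≤ p * j := by
          rw [pow_succ]
          calc p ^ Nat.log p j * p ≤ j * p := Nat.mul_le_mul_right p hpl
          _ = p * j := Nat.mul_comm _ _
        have h2 : ((p * j : ℕ):ℝ) ≤ (p:ℝ)*(j+1) := by push_cast; nlinarith [hp1]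
        calc ((p ^ (Nat.log p j + 1) : ℕ) : ℝ) ≤ ((p*j : ℕ):ℝ) := by exact_mod_cast h3
        _ ≤ (p:ℝ)*(j+1) := h2

end padicfacts

/-- `f_m(z) = ∏ₖ (z − αₖ)^{mₖ}`. -/
noncomputable def fpoly {F : Type*} [Field F] {s : ℕ} (α : Fin s → F) (m : Fin s → ℕ) :
    F[X] := ∏ k, (X - C (α k)) ^ m k

/-- `P_m(z) = Σ_{j=0}^{M} f_m^{(j)}(z)`, the sum of `f_m` and all its derivatives. -/
noncomputable def Ppoly {F : Type*} [Field F] {s : ℕ} (α : Fin s → F) (m : Fin s → ℕ) :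
    F[X] := ∑ j ∈ Finset.range (∑ k, m k + 1), derivative^[j] (fpoly α m)

/-- The exponential series `exp(x) = Σ_{m≥0} x^m/m!`. -/
noncomputable def expF {F : Type*} [NormedField F] [CharZero F] (x : F) : F :=
  ∑' m : ℕ, x ^ m / (m.factorial : F)

private lemma taylor_fpoly {F : Type*} [Field F] {s : ℕ} (α : Fin s → F) (m : Fin s → ℕ)
    (x : F) : taylor x (fpoly α m) = ∏ k, (X + C (x - α k)) ^ m k := by
  simp only [fpoly, taylor_apply, prod_comp, pow_comp, sub_comp, X_comp, C_comp, C_sub]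
  congr 1; funext k; ring_nf

private lemma natDegree_fpoly_le {F : Type*} [Field F] {s : ℕ} (α : Fin s → F)
    (m : Fin s → ℕ) : (fpoly α m).natDegree ≤ ∑ k, m k := by
  refine (natDegree_prod_le _ _).trans (Finset.sum_le_sum fun k _ => ?_)
  calc ((X - C (α k)) ^ m k).natDegree ≤ m k * (X - C (α k)).natDegree := natDegree_pow_le
    _ ≤ m k * 1 := by gcongr; exact natDegree_X_sub_C_le _
    _ = m k := mul_one _

private lemma eval_iterate_derivative {F : Type*} [Field F] (f : F[X]) (x : F) (j : ℕ) :
    (derivative^[j] f).eval x = (j.factorial : F) * (taylor x f).coeff j := by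
  rw [taylor_coeff, ← Polynomial.factorial_smul_hasseDeriv]
  simp [nsmul_eq_mul]

/-- With `P = P_{n−e_ℓ}` for `n` with positive coordinates:
(a) `‖P(αᵢ)‖ ≤ p³ N ∏ₖ max(‖αᵢ−αₖ‖, δ)^{nₖ}` for every `i`;
(b) if `‖αᵢ−αₖ‖ = 1` for all `k ≠ i`, then `‖P(αᵢ)‖ ≤ ‖(nᵢ−1)!‖`;
(c) `‖P(αᵢ)·exp(αⱼ−αᵢ) − P(αⱼ)‖ ≤ p³ N ∏ₖ max(‖αᵢ−αₖ‖,‖αⱼ−αₖ‖)^{nₖ}`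
whenever `0 < ‖αⱼ−αᵢ‖ < δ`. -/
theorem stmt12 {F : Type*} [NormedField F] [CharZero F] [CompleteSpace F]
    (p : ℕ) (hp : p.Prime)
    (hna : ∀ x y : F, ‖x + y‖ ≤ max ‖x‖ ‖y‖)
    (hQ : ∀ q : ℚ, ‖(q : F)‖ = (padicNorm p q : ℝ))
    (δ : ℝ) (hδ : δ = (p : ℝ) ^ (-(1 : ℝ) / ((p : ℝ) - 1)))
    {s : ℕ} (α : Fin s → F) (hα : Function.Injective α)
    (n : Fin s → ℕ) (hn : ∀ i, 0 < n i) (N : ℕ) (hN : N = ∑ k, n k)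
    (ℓ : Fin s) (P : F[X])
    (hP : P = Ppoly α fun k => n k - if k = ℓ then 1 else 0) :
    (∀ i, ‖P.eval (α i)‖ ≤
        (p : ℝ) ^ 3 * N * ∏ k, max ‖α i - α k‖ δ ^ n k) ∧
      (∀ i, (∀ k, k ≠ i → ‖α i - α k‖ = 1) →
        ‖P.eval (α i)‖ ≤ ‖((n i - 1).factorial : F)‖) ∧
      (∀ i j, 0 < ‖α j - α i‖ → ‖α j - α i‖ < δ →
        ‖P.eval (α i) * expF (α j - α i) - P.eval (α j)‖ ≤
          (p : ℝ) ^ 3 * N * ∏ k, max ‖α i - α k‖ ‖α j - α k‖ ^ n k) := by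
  classical
  haveI := Fact.mk hp
  have hp1 : (1:ℝ) < p := by exact_mod_cast hp.one_lt
  have hp0 : (0:ℝ) < p := by linarith
  have hpm : (0:ℝ) < (p:ℝ) - 1 := by
    have : (2:ℝ) ≤ p := by exact_mod_cast hp.two_le
    linarith
  have hδ0 : 0 < δ := hδ ▸ Real.rpow_pos_of_pos hp0 _
  have hδp : 1 ≤ δ * p := by
    have e : δ * p = (p:ℝ) ^ (-(1:ℝ)/((p:ℝ)-1) + 1) := by
      rw [hδ, Real.rpow_add hp0, Real.rpow_one]
    rw [e]
    apply Real.one_le_rpow hp1.le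
    rw [neg_div]
    have h1 : (1:ℝ)/((p:ℝ)-1) ≤ 1 := by
      rw [div_le_one hpm]
      have : (2:ℝ) ≤ p := by exact_mod_cast hp.two_le
      linarith
    linarith
  have hδj : ∀ j : ℕ, δ ^ j * (p:ℝ) ^ ((j:ℝ)/((p:ℝ)-1)) = 1 := by
    intro j
    rw [hδ, ← Real.rpow_natCast ((p:ℝ) ^ (-(1:ℝ)/((p:ℝ)-1))) j, ← Real.rpow_mul hp0.le,
      ← Real.rpow_add hp0]
    rw [show -(1:ℝ)/((p:ℝ)-1) * (j:ℝ) + (j:ℝ)/((p:ℝ)-1) = 0 by field_simp; ring]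
    exact Real.rpow_zero _
  have hEpos : ∀ x : ℝ, 0 < (p:ℝ) ^ x := fun x => Real.rpow_pos_of_pos hp0 x
  have hE1 : (p:ℝ) ^ ((1:ℝ)/((p:ℝ)-1)) ≤ p := by
    have h2 : (p:ℝ) ^ ((1:ℝ)/((p:ℝ)-1)) ≤ (p:ℝ) ^ (1:ℝ) := by
      apply Real.rpow_le_rpow_of_exponent_le hp1.le
      rw [div_le_one hpm]
      have : (2:ℝ) ≤ p := by exact_mod_cast hp.two_le
      linarith
    rwa [Real.rpow_one] at h2
  set m : Fin s → ℕ := fun k => n k - if k = ℓ then 1 else 0 with hm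
  have hnm : ∀ k, n k = m k + if k = ℓ then 1 else 0 := by
    intro k; simp only [hm]; have := hn k; split <;> omega
  set f : F[X] := fpoly α m with hf
  set D : ℕ := ∑ k, m k with hD
  have hDN : D + 1 = N := by
    rw [hN, hD]
    rw [Finset.sum_congr rfl (fun k (_ : k ∈ Finset.univ) => hnm k), Finset.sum_add_distrib]
    simp
  have hN1 : 1 ≤ N := by omega
  have hNr : (1:ℝ) ≤ N := by exact_mod_cast hN1
  have hPe : ∀ x : F, P.eval x = ∑ j ∈ Finset.range (D+1), (derivative^[j] f).eval x := by
    intro x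
    rw [hP]
    unfold Ppoly
    rw [eval_finset_sum]
  have hdegf : f.natDegree ≤ D := hD ▸ natDegree_fpoly_le α m
  have key : ∀ (x : F) (c : ℝ), 0 < c → ∀ j,
      ‖(Polynomial.taylor x f).coeff j‖ * c ^ j ≤ ∏ k, max ‖x - α k‖ c ^ m k := by
    intro x c hc j
    rw [hf, taylor_fpoly]
    exact coeff_prod_bound hna hc _ m j
  -- split off the ℓ factor of a product
  have prod_split : ∀ (M : Fin s → ℝ),
      ∏ k, M k ^ n k = (∏ k, M k ^ m k) * M ℓ := by
    intro M
    have e : ∀ k, M k ^ n k = M k ^ m k * M k ^ (if k = ℓ then 1 else 0) := by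
      intro k; rw [← pow_add, ← hnm k]
    rw [Finset.prod_congr rfl (fun k _ => e k), Finset.prod_mul_distrib]
    congr 1
    rw [show (∏ k, M k ^ (if k = ℓ then 1 else 0)) = ∏ k, (if k = ℓ then M k else 1) by
      apply Finset.prod_congr rfl; intro k _; split <;> simp]
    simp [Finset.prod_ite_eq']
  refine ⟨?_, ?_, ?_⟩
  -- (a)
  · intro i
    have hmax : ∀ k, 0 < max ‖α i - α k‖ δ := fun k => lt_of_lt_of_le hδ0 (le_max_right _ _)
    have hPr0 : (0:ℝ) ≤ ∏ k, max ‖α i - α k‖ δ ^ n k :=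
      Finset.prod_nonneg fun k _ => pow_nonneg (hmax k).le _
    have hPrm0 : (0:ℝ) ≤ ∏ k, max ‖α i - α k‖ δ ^ m k :=
      Finset.prod_nonneg fun k _ => pow_nonneg (hmax k).le _
    rw [hPe (α i)]
    apply na_sum hna _ _ (by positivity)
    intro j hj
    have hj' : (j:ℝ) + 1 ≤ (N:ℝ) := by
      have := Finset.mem_range.mp hj
      exact_mod_cast by omega
    have e1 : (derivative^[j] f).eval (α i) = (j.factorial : F) * (taylor (α i) f).coeff j :=
      eval_iterate_derivative f (α i) j
    have e2 := key (α i) δ hδ0 j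
    set Ej := (p:ℝ) ^ ((j:ℝ)/((p:ℝ)-1)) with hEj
    have e3 : ‖(taylor (α i) f).coeff j‖ ≤ (∏ k, max ‖α i - α k‖ δ ^ m k) * Ej := by
      calc ‖(taylor (α i) f).coeff j‖ = ‖(taylor (α i) f).coeff j‖ * (δ ^ j * Ej) := by
            rw [hδj j, mul_one]
        _ = (‖(taylor (α i) f).coeff j‖ * δ ^ j) * Ej := by ring
        _ ≤ (∏ k, max ‖α i - α k‖ δ ^ m k) * Ej :=
            mul_le_mul_of_nonneg_right e2 (hEpos _).le
    have e4 : (∏ k, max ‖α i - α k‖ δ ^ m k) ≤ (p:ℝ) * ∏ k, max ‖α i - α k‖ δ ^ n k := by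
      have hsp := prod_split (fun k => max ‖α i - α k‖ δ)
      have hδℓ : δ ≤ max ‖α i - α ℓ‖ δ := le_max_right _ _
      calc (∏ k, max ‖α i - α k‖ δ ^ m k)
          = (∏ k, max ‖α i - α k‖ δ ^ m k) * 1 := (mul_one _).symm
        _ ≤ (∏ k, max ‖α i - α k‖ δ ^ m k) * (δ * p) := by
            exact mul_le_mul_of_nonneg_left hδp hPrm0
        _ = ((∏ k, max ‖α i - α k‖ δ ^ m k) * δ) * p := by ring
        _ ≤ ((∏ k, max ‖α i - α k‖ δ ^ m k) * max ‖α i - α ℓ‖ δ) * p := by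
            apply mul_le_mul_of_nonneg_right _ hp0.le
            exact mul_le_mul_of_nonneg_left hδℓ hPrm0
        _ = (p:ℝ) * ∏ k, max ‖α i - α k‖ δ ^ n k := by rw [← hsp]; ring
    calc ‖(derivative^[j] f).eval (α i)‖
        = ‖((j.factorial : ℕ) : F)‖ * ‖(taylor (α i) f).coeff j‖ := by rw [e1, norm_mul]
      _ ≤ ‖((j.factorial : ℕ) : F)‖ * ((∏ k, max ‖α i - α k‖ δ ^ m k) * Ej) :=
          mul_le_mul_of_nonneg_left e3 (norm_nonneg _)
      _ = (‖((j.factorial : ℕ) : F)‖ * Ej) * (∏ k, max ‖α i - α k‖ δ ^ m k) := by ring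
      _ ≤ ((p:ℝ) * (j+1)) * (∏ k, max ‖α i - α k‖ δ ^ m k) :=
          mul_le_mul_of_nonneg_right (padic_fact_upper hp hQ j) hPrm0
      _ ≤ ((p:ℝ) * N) * ((p:ℝ) * ∏ k, max ‖α i - α k‖ δ ^ n k) := by
          apply mul_le_mul _ e4 hPrm0 (by positivity)
          exact mul_le_mul_of_nonneg_left hj' hp0.le
      _ = (p:ℝ)^2 * ((N:ℝ) * ∏ k, max ‖α i - α k‖ δ ^ n k) := by ring
      _ ≤ (p:ℝ)^3 * ((N:ℝ) * ∏ k, max ‖α i - α k‖ δ ^ n k) := by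
          apply mul_le_mul_of_nonneg_right _ (mul_nonneg (Nat.cast_nonneg N) hPr0)
          nlinarith [hp1]
      _ = (p:ℝ) ^ 3 * N * ∏ k, max ‖α i - α k‖ δ ^ n k := by ring
  -- (b)
  · intro i hik
    rw [hPe (α i)]
    apply na_sum hna _ _ (norm_nonneg _)
    intro j hj
    have e1 : (derivative^[j] f).eval (α i) = (j.factorial : F) * (taylor (α i) f).coeff j :=
      eval_iterate_derivative f (α i) j
    by_cases hcase : j < m i
    · have hc0 : (taylor (α i) f).coeff j = 0 := by
        rw [hf, taylor_fpoly]
        have hfac : (∏ k, (X + C (α i - α k)) ^ m k)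
            = (∏ k ∈ Finset.univ.erase i, (X + C (α i - α k)) ^ m k) * (X:F[X]) ^ m i := by
          rw [← Finset.mul_prod_erase Finset.univ _ (Finset.mem_univ i)]
          rw [sub_self, map_zero, add_zero]
          ring
        rw [hfac, coeff_mul_X_pow', if_neg (not_le.mpr hcase)]
      rw [e1, hc0, mul_zero]
      simp
    · push_neg at hcase
      have hco : ‖(taylor (α i) f).coeff j‖ ≤ 1 := by
        have h1 := key (α i) 1 one_pos j
        rw [one_pow, mul_one] at h1
        refine h1.trans (le_of_eq ?_)
        apply Finset.prod_eq_one
        intro k _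
        by_cases hk : k = i
        · subst hk; simp
        · rw [hik k hk]; simp
      have hmn : (n i - 1) ≤ m i := by
        have := hn i; simp only [hm]; split <;> omega
      calc ‖(derivative^[j] f).eval (α i)‖
          = ‖((j.factorial : ℕ) : F)‖ * ‖(taylor (α i) f).coeff j‖ := by rw [e1, norm_mul]
        _ ≤ ‖((j.factorial : ℕ) : F)‖ * 1 := mul_le_mul_of_nonneg_left hco (norm_nonneg _)
        _ = ‖((j.factorial : ℕ) : F)‖ := mul_one _
        _ ≤ ‖(((m i).factorial : ℕ) : F)‖ := norm_factorial_mono hp hQ hcase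
        _ ≤ ‖(((n i - 1).factorial : ℕ) : F)‖ := norm_factorial_mono hp hQ hmn
  -- (c)
  · intro i j0 hpos hlt
    set h : F := α j0 - α i with hh
    have hαj : α j0 = α i + h := by rw [hh]; ring
    set r : ℝ := ‖h‖ / δ with hr
    have hr0 : 0 < r := div_pos hpos hδ0
    have hr1 : r < 1 := (div_lt_one hδ0).mpr hlt
    set u : ℕ → F := fun t => h ^ t / (t.factorial : F) with hu
    have hfacpos : ∀ t : ℕ, (0:ℝ) < ‖((t.factorial : ℕ) : F)‖ := by
      intro t
      have := padic_fact_lower hp hQ t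
      exact lt_of_lt_of_le (hEpos _) this
    have hδpow : ∀ t : ℕ, δ ^ t = (p:ℝ) ^ (-(t:ℝ)/((p:ℝ)-1)) := by
      intro t
      rw [hδ, ← Real.rpow_natCast ((p:ℝ) ^ (-(1:ℝ)/((p:ℝ)-1))) t, ← Real.rpow_mul hp0.le]
      congr 1
      ring
    have hub : ∀ t, ‖u t‖ ≤ r ^ t := by
      intro t
      have hft : δ ^ t ≤ ‖((t.factorial : ℕ) : F)‖ := by
        rw [hδpow t]; exact padic_fact_lower hp hQ t
      simp only [hu]
      rw [norm_div, norm_pow, hr, div_pow]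
      apply div_le_div_of_nonneg_left (by positivity) (by positivity)
      exact_mod_cast hft
    have husum : Summable u :=
      Summable.of_norm_bounded (summable_geometric_of_lt_one hr0.le hr1) hub
    have hexp : expF h = ∑' t, u t := by simp [expF, hu]
    -- the algebraic identity for P(α j0)
    have hPj : P.eval (α j0) = ∑ m' ∈ Finset.range (D+1),
        (derivative^[m'] f).eval (α i) * ∑ t ∈ Finset.range (m'+1), u t := by
      rw [hPe, hαj]
      have hterm : ∀ q, (derivative^[q] f).eval (α i + h)
          = ∑ t ∈ Finset.range (D+1), (derivative^[t + q] f).eval (α i) * u t := by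
        intro q
        have hdq : (derivative^[q] f).natDegree < D + 1 := by
          have h1 := Polynomial.natDegree_iterate_derivative f q
          omega
        have e : (derivative^[q] f).eval (α i + h)
            = (taylor (α i) (derivative^[q] f)).eval h := by
          rw [taylor_eval, add_comm]
        rw [e, Polynomial.eval_eq_sum_range' (by rwa [natDegree_taylor]) h]
        apply Finset.sum_congr rfl
        intro t _
        have e2 : (derivative^[t] (derivative^[q] f)).eval (α i)
            = (t.factorial : F) * (taylor (α i) (derivative^[q] f)).coeff t :=
          eval_iterate_derivative _ _ _
        have e3 : derivative^[t] (derivative^[q] f) = derivative^[t + q] f :=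
          (Function.iterate_add_apply _ t q f).symm
        rw [← e3, e2]
        have hft : ((t.factorial : ℕ) : F) ≠ 0 := by
          exact_mod_cast Nat.cast_ne_zero.mpr t.factorial_ne_zero
        simp only [hu]
        field_simp
      rw [Finset.sum_congr rfl (fun q _ => hterm q)]
      exact double_sum_reindex (fun m' => (derivative^[m'] f).eval (α i)) u D
        (fun m' hm' => by
          show (derivative^[m'] f).eval (α i) = 0
          rw [Polynomial.iterate_derivative_eq_zero (lt_of_le_of_lt hdegf hm'), eval_zero])
    have hdiff : P.eval (α i) * expF h - P.eval (α j0)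
        = ∑ m' ∈ Finset.range (D+1),
            (derivative^[m'] f).eval (α i) * (expF h - ∑ t ∈ Finset.range (m'+1), u t) := by
      rw [hPe (α i), Finset.sum_mul, hPj, ← Finset.sum_sub_distrib]
      exact Finset.sum_congr rfl fun _ _ => (mul_sub _ _ _).symm
    rw [hdiff]
    -- bound each term
    set Mk : Fin s → ℝ := fun k => max ‖α i - α k‖ ‖α j0 - α k‖ with hMkdef
    have hMk : ∀ k, ‖h‖ ≤ Mk k := by
      intro k
      have e : h = (α j0 - α k) + -(α i - α k) := by rw [hh]; ring
      calc ‖h‖ = ‖(α j0 - α k) + -(α i - α k)‖ := by rw [← e]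
        _ ≤ max ‖α j0 - α k‖ ‖-(α i - α k)‖ := hna _ _
        _ = max ‖α j0 - α k‖ ‖α i - α k‖ := by rw [norm_neg]
        _ = Mk k := max_comm _ _
    have hMk0 : ∀ k, 0 < Mk k := fun k => lt_of_lt_of_le hpos (hMk k)
    have hPr0 : (0:ℝ) ≤ ∏ k, Mk k ^ n k :=
      Finset.prod_nonneg fun k _ => pow_nonneg (hMk0 k).le _
    have hPrm0 : (0:ℝ) ≤ ∏ k, Mk k ^ m k :=
      Finset.prod_nonneg fun k _ => pow_nonneg (hMk0 k).le _
    apply na_sum hna _ _ (by positivity)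
    intro m' hm'
    have hm'N : (m':ℝ) + 1 ≤ (N:ℝ) := by
      have := Finset.mem_range.mp hm'
      exact_mod_cast by omega
    have e1 : (derivative^[m'] f).eval (α i)
        = (m'.factorial : F) * (taylor (α i) f).coeff m' :=
      eval_iterate_derivative f (α i) m'
    -- tail bound
    have htail : ‖expF h - ∑ t ∈ Finset.range (m'+1), u t‖ ≤ r ^ (m'+1) := by
      have hsplit := Summable.sum_add_tsum_nat_add (m'+1) husum
      have e : expF h - ∑ t ∈ Finset.range (m'+1), u t = ∑' t, u (t + (m'+1)) := by
        rw [hexp, ← hsplit]; ring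
      rw [e]
      apply na_tsum hna _ ((summable_nat_add_iff (m'+1)).mpr husum) (by positivity)
      intro t
      calc ‖u (t + (m'+1))‖ ≤ r ^ (t + (m'+1)) := hub _
        _ ≤ r ^ (m'+1) := pow_le_pow_of_le_one hr0.le hr1.le (by omega)
    -- coefficient bound
    have e2 : ‖(taylor (α i) f).coeff m'‖ * ‖h‖ ^ m' ≤ ∏ k, Mk k ^ m k := by
      refine (key (α i) ‖h‖ hpos m').trans ?_
      apply Finset.prod_le_prod
      · intro k _; positivity
      · intro k _
        apply pow_le_pow_left₀ (by positivity)
        exact max_le ((le_max_left _ _).trans le_rfl) ((hMk k).trans le_rfl)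
    have e4 : (∏ k, Mk k ^ m k) * ‖h‖ ≤ ∏ k, Mk k ^ n k := by
      rw [prod_split Mk]
      exact mul_le_mul_of_nonneg_left (hMk ℓ) hPrm0
    -- assemble
    set E := (p:ℝ) ^ ((m':ℝ)/((p:ℝ)-1)) with hE
    set E1 := (p:ℝ) ^ ((1:ℝ)/((p:ℝ)-1)) with hE1d
    have hrpow : r ^ (m'+1) = ‖h‖ ^ (m'+1) * (E * E1) := by
      have hδm : δ ^ (m'+1) * (E * E1) = 1 := by
        have h1 := hδj m'
        have h2 := hδj 1
        rw [pow_one] at h2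
        rw [Nat.cast_one] at h2
        calc δ ^ (m'+1) * (E * E1) = (δ ^ m' * E) * (δ * E1) := by ring
          _ = 1 * 1 := by rw [h1, h2]
          _ = 1 := one_mul 1
      have hδne : δ ^ (m'+1) ≠ 0 := by positivity
      rw [hr, div_pow, div_eq_iff hδne]
      calc ‖h‖^(m'+1) = ‖h‖^(m'+1) * 1 := (mul_one _).symm
        _ = ‖h‖^(m'+1) * (δ^(m'+1) * (E*E1)) := by rw [hδm]
        _ = ‖h‖ ^ (m'+1) * (E * E1) * δ ^ (m'+1) := by ring
    have hE10 : (0:ℝ) ≤ E1 := (hEpos _).le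
    have hE0 : (0:ℝ) ≤ E := (hEpos _).le
    calc ‖(derivative^[m'] f).eval (α i) * (expF h - ∑ t ∈ Finset.range (m'+1), u t)‖
        = ‖((m'.factorial : ℕ):F)‖ * ‖(taylor (α i) f).coeff m'‖
            * ‖expF h - ∑ t ∈ Finset.range (m'+1), u t‖ := by
          rw [e1, norm_mul, norm_mul]
      _ ≤ ‖((m'.factorial : ℕ):F)‖ * ‖(taylor (α i) f).coeff m'‖ * r ^ (m'+1) := by
          apply mul_le_mul_of_nonneg_left htail
          exact mul_nonneg (norm_nonneg _) (norm_nonneg _)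
      _ = (‖((m'.factorial : ℕ):F)‖ * E)
            * ((‖(taylor (α i) f).coeff m'‖ * ‖h‖ ^ m') * (‖h‖ * E1)) := by
          rw [hrpow]; ring
      _ ≤ ((p:ℝ) * (m'+1)) * ((∏ k, Mk k ^ m k) * (‖h‖ * E1)) := by
          apply mul_le_mul (padic_fact_upper hp hQ m')
            (mul_le_mul_of_nonneg_right e2 (mul_nonneg (norm_nonneg _) hE10))
            (mul_nonneg (mul_nonneg (norm_nonneg _) (pow_nonneg (norm_nonneg _) _))
              (mul_nonneg (norm_nonneg _) hE10))
            (by positivity)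
      _ = ((p:ℝ) * (m'+1)) * (((∏ k, Mk k ^ m k) * ‖h‖) * E1) := by ring
      _ ≤ ((p:ℝ) * N) * ((∏ k, Mk k ^ n k) * (p:ℝ)) := by
          apply mul_le_mul (mul_le_mul_of_nonneg_left hm'N hp0.le)
            (mul_le_mul e4 hE1 hE10 hPr0)
            (mul_nonneg (mul_nonneg hPrm0 (norm_nonneg _)) hE10)
            (by positivity)
      _ = (p:ℝ)^2 * ((N:ℝ) * ∏ k, Mk k ^ n k) := by ring
      _ ≤ (p:ℝ)^3 * ((N:ℝ) * ∏ k, Mk k ^ n k) := by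
          apply mul_le_mul_of_nonneg_right _ (mul_nonneg (Nat.cast_nonneg N) hPr0)
          nlinarith [hp1]
      _ = (p:ℝ)^3 * N * ∏ k, Mk k ^ n k := by ring
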